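/- Let n ≥ 1, let P be an n × n matrix over 𝔽₂ with P Pᵀ = I, let G be the associated bipartite graph on V = L ⊔ R, fix i ∈ L, and let D ⊆ R be a set with i ∈ Odd(D) (equivalently, |D ∩ N_i| is odd). Then the operator U_D' Z_{N_i} = Z_D X_{Odd(D)\{i}} Z_{N_i} stabilizes the graph state of the vertex-deleted graph: Z_D X_{Odd(D)\{i}} Z_{N_i} |G \ i⟩ = |G \ i⟩. (Here Odd(D) and N_i are computed in G, and G \ i is the graph obtained from G by deleting vertex i.) -/

import Mathlib

open Matrix

/-- The bipartite graph on `Fin n ⊕ Fin n` (left copy `L = Sum.inl`, right copy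
`R = Sum.inr`) in which `Sum.inl a` is adjacent to `Sum.inr b` iff `P a b = 1`,
and there are no other edges. -/
def bipGraph (n : ℕ) (P : Matrix (Fin n) (Fin n) (ZMod 2)) :
    SimpleGraph (Fin n ⊕ Fin n) where
  Adj u v := (∃ a b, P a b = 1 ∧ u = Sum.inl a ∧ v = Sum.inr b) ∨
             (∃ a b, P a b = 1 ∧ u = Sum.inr b ∧ v = Sum.inl a)
  symm := by
    constructor
    rintro u v (⟨a, b, h, rfl, rfl⟩ | ⟨a, b, h, rfl, rfl⟩)
    · exact Or.inr ⟨a, b, h, rfl, rfl⟩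
    · exact Or.inl ⟨a, b, h, rfl, rfl⟩
  loopless := by
    constructor
    rintro u (⟨a, b, h, rfl, h2⟩ | ⟨a, b, h, rfl, h2⟩) <;> simp at h2

/-- The odd neighbourhood of a set `S`: the set of vertices `v` such that the number
of neighbours of `v` lying in `S` is odd. -/
def oddNbhd {V : Type*} (G : SimpleGraph V) (S : Set V) : Set V :=
  {v | Odd (G.neighborSet v ∩ S).ncard}

/-- The quadratic form of a graph: `q(x) = ∑_{{u,v} ∈ E(H)} x_u x_v` over `𝔽₂`. -/
noncomputable def qForm {W : Type*} (H : SimpleGraph W) (x : W → ZMod 2) : ZMod 2 :=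
  ∑ᶠ e ∈ H.edgeSet, Sym2.lift ⟨fun u v => x u * x v, fun _ _ => mul_comm _ _⟩ e

/-- The graph state of `H`: the vector in `ℂ^(W → ZMod 2)` with amplitude
`2^{-|W|/2} (-1)^{q(x)}` at the basis label `x`. -/
noncomputable def graphState {W : Type*} (H : SimpleGraph W) : (W → ZMod 2) → ℂ :=
  fun x => (Real.sqrt 2 : ℂ)⁻¹ ^ Nat.card W * (-1 : ℂ) ^ (qForm H x).val

/-- The Pauli operator `X_S = ∏_{w ∈ S} X_w`, acting by `(X_S ψ)(x) = ψ(x + 1_S)`. -/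
noncomputable def XOp {W : Type*} (S : Set W) (ψ : (W → ZMod 2) → ℂ) : (W → ZMod 2) → ℂ :=
  fun x => ψ (x + S.indicator 1)

/-- The Pauli operator `Z_S = ∏_{w ∈ S} Z_w`, acting by
`(Z_S ψ)(x) = (-1)^{∑_{w ∈ S} x_w} ψ(x)`. -/
noncomputable def ZOp {W : Type*} (S : Set W) (ψ : (W → ZMod 2) → ℂ) : (W → ZMod 2) → ℂ :=
  fun x => (-1 : ℂ) ^ (∑ᶠ w ∈ S, (x w).val) * ψ x

lemma zmod2_cases (u : ZMod 2) : u = 0 ∨ u = 1 := by revert u; decide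

lemma chi_natCast (m : ℕ) : ((-1:ℂ)) ^ ((m : ZMod 2)).val = (-1) ^ m := by
  rw [ZMod.val_natCast]
  conv_rhs => rw [← Nat.div_add_mod m 2, pow_add, pow_mul]
  norm_num

lemma chi_add (u v : ZMod 2) : ((-1:ℂ)) ^ (u + v).val = (-1) ^ u.val * (-1) ^ v.val := by
  rcases zmod2_cases u with rfl | rfl <;> rcases zmod2_cases v with rfl | rfl <;>
    norm_num [ZMod.val_one, show ZMod.val (2 : ZMod 2) = 0 from rfl]

lemma chi_sq (u : ZMod 2) : ((-1:ℂ)) ^ u.val * (-1) ^ u.val = 1 := by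
  rcases zmod2_cases u with rfl | rfl <;> norm_num [ZMod.val_one]

lemma odd_iff_natCast (m : ℕ) : Odd m ↔ ((m : ZMod 2) = 1) := by
  rw [Nat.odd_iff, ← ZMod.natCast_mod m 2]
  rcases Nat.mod_two_eq_zero_or_one m with h | h <;> rw [h] <;> simp

lemma bipGraph_adj {n : ℕ} {P : Matrix (Fin n) (Fin n) (ZMod 2)} {u v : Fin n ⊕ Fin n} :
    (bipGraph n P).Adj u v ↔
      ((∃ a b, P a b = 1 ∧ u = Sum.inl a ∧ v = Sum.inr b) ∨
       (∃ a b, P a b = 1 ∧ u = Sum.inr b ∧ v = Sum.inl a)) := Iff.rfl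

lemma bipGraph_adj_inl {n : ℕ} {P : Matrix (Fin n) (Fin n) (ZMod 2)} {a : Fin n}
    {v : Fin n ⊕ Fin n} :
    (bipGraph n P).Adj (Sum.inl a) v ↔ ∃ b, P a b = 1 ∧ v = Sum.inr b := by
  rw [bipGraph_adj]
  constructor
  · rintro (⟨a', b', h, ha, rfl⟩ | ⟨a', b', h, ha, hv⟩)
    · obtain rfl := Sum.inl.inj ha
      exact ⟨b', h, rfl⟩
    · simp at ha
  · rintro ⟨b, h, rfl⟩
    exact Or.inl ⟨a, b, h, rfl, rfl⟩

lemma bipGraph_adj_inr {n : ℕ} {P : Matrix (Fin n) (Fin n) (ZMod 2)} {b : Fin n}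
    {v : Fin n ⊕ Fin n} :
    (bipGraph n P).Adj (Sum.inr b) v ↔ ∃ a, P a b = 1 ∧ v = Sum.inl a := by
  rw [bipGraph_adj]
  constructor
  · rintro (⟨a', b', h, ha, hv⟩ | ⟨a', b', h, hb, rfl⟩)
    · simp at ha
    · obtain rfl := Sum.inr.inj hb
      exact ⟨a', h, rfl⟩
  · rintro ⟨a, h, rfl⟩
    exact Or.inr ⟨a, b, h, rfl, rfl⟩

lemma oddNbhd_inl {n : ℕ} {P : Matrix (Fin n) (Fin n) (ZMod 2)} (D : Set (Fin n ⊕ Fin n))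
    (a : Fin n) :
    Sum.inl a ∈ oddNbhd (bipGraph n P) D ↔
      (∑ b, P a b * ({b' | Sum.inr b' ∈ D}.indicator 1 b) : ZMod 2) = 1 := by
  classical
  have hset : (bipGraph n P).neighborSet (Sum.inl a) ∩ D =
      Sum.inr '' {b | P a b = 1 ∧ Sum.inr b ∈ D} := by
    ext v
    simp only [Set.mem_inter_iff, SimpleGraph.mem_neighborSet, bipGraph_adj_inl,
      Set.mem_image, Set.mem_setOf_eq]
    constructor
    · rintro ⟨⟨b, h, rfl⟩, hv⟩
      exact ⟨b, ⟨h, hv⟩, rfl⟩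
    · rintro ⟨b, ⟨h, hv⟩, rfl⟩
      exact ⟨⟨b, h, rfl⟩, hv⟩
  rw [oddNbhd, Set.mem_setOf_eq, hset,
    Set.ncard_image_of_injective _ Sum.inr_injective]
  set T : Set (Fin n) := {b | P a b = 1 ∧ Sum.inr b ∈ D} with hT
  have hTfin : T = ↑(Finset.univ.filter (fun b => b ∈ T)) := by ext b; simp
  rw [hTfin, Set.ncard_coe_finset, odd_iff_natCast, Finset.card_filter]
  push_cast
  have heq : (∑ x : Fin n, if x ∈ T then (1 : ZMod 2) else 0) =
      ∑ b : Fin n, P a b * {b' | Sum.inr b' ∈ D}.indicator 1 b := by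
    apply Finset.sum_congr rfl
    intro b _
    rcases zmod2_cases (P a b) with h | h <;>
      by_cases hb : Sum.inr b ∈ D <;>
      simp [hT, h, hb, Set.indicator_apply]
  rw [heq]

lemma oddNbhd_inr {n : ℕ} {P : Matrix (Fin n) (Fin n) (ZMod 2)} {D : Set (Fin n ⊕ Fin n)}
    (hD : D ⊆ Set.range Sum.inr) (b : Fin n) :
    Sum.inr b ∉ oddNbhd (bipGraph n P) D := by
  intro hb
  have hempty : (bipGraph n P).neighborSet (Sum.inr b) ∩ D = ∅ := by
    ext v
    simp only [Set.mem_inter_iff, SimpleGraph.mem_neighborSet, bipGraph_adj_inr,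
      Set.mem_empty_iff_false, iff_false, not_and]
    rintro ⟨a, h, rfl⟩ hv
    rcases hD hv with ⟨c, hc⟩
    simp at hc
  rw [oddNbhd, Set.mem_setOf_eq, hempty] at hb
  simp at hb

lemma zmod2_val_cast (u : ZMod 2) : ((u.val : ℕ) : ZMod 2) = u := by
  rcases zmod2_cases u with rfl | rfl <;> rfl

lemma cast_finsum_mem {α : Type*} [Fintype α] (S : Set α) (f : α → ℕ) :
    ((∑ᶠ a ∈ S, f a : ℕ) : ZMod 2) =
      ∑ a : α, S.indicator (fun a => ((f a : ℕ) : ZMod 2)) a := by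
  classical
  rw [finsum_mem_def, finsum_eq_sum_of_fintype, Nat.cast_sum]
  apply Finset.sum_congr rfl
  intro a _
  by_cases h : a ∈ S <;>
    simp [Set.indicator_of_mem, Set.indicator_of_notMem, h]

lemma qForm_induce {n : ℕ} (P : Matrix (Fin n) (Fin n) (ZMod 2)) (i : Fin n)
    (z : ({Sum.inl i}ᶜ : Set (Fin n ⊕ Fin n)) → ZMod 2) :
    qForm (SimpleGraph.induce ({Sum.inl i}ᶜ : Set (Fin n ⊕ Fin n)) (bipGraph n P)) z =
      ∑ a, ∑ b, P a b *
        (if h : a = i then 0 else z ⟨Sum.inl a, by simp [h]⟩) *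
        z ⟨Sum.inr b, by simp⟩ := by
  classical
  have hL : ∀ (a : Fin n), a ≠ i →
      (Sum.inl a : Fin n ⊕ Fin n) ∈ ({Sum.inl i}ᶜ : Set (Fin n ⊕ Fin n)) := by
    intro a h; simp [h]
  have hR : ∀ b : Fin n,
      (Sum.inr b : Fin n ⊕ Fin n) ∈ ({Sum.inl i}ᶜ : Set (Fin n ⊕ Fin n)) := by
    intro b; simp
  set gE : Fin n × Fin n → Sym2 ↥({Sum.inl i}ᶜ : Set (Fin n ⊕ Fin n)) := fun p =>
    if h : p.1 = i then s(⟨Sum.inr p.2, hR p.2⟩, ⟨Sum.inr p.2, hR p.2⟩)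
    else s(⟨Sum.inl p.1, hL p.1 h⟩, ⟨Sum.inr p.2, hR p.2⟩) with hgE
  set E₀ : Set (Fin n × Fin n) := {p | p.1 ≠ i ∧ P p.1 p.2 = 1} with hE₀
  have hgE_eq : ∀ (a b : Fin n) (h : a ≠ i),
      gE (a, b) = s(⟨Sum.inl a, hL a h⟩, ⟨Sum.inr b, hR b⟩) := by
    intro a b h
    rw [hgE]
    exact dif_neg h
  have hedge : (SimpleGraph.induce ({Sum.inl i}ᶜ : Set (Fin n ⊕ Fin n))
      (bipGraph n P)).edgeSet = gE '' E₀ := by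
    apply Set.Subset.antisymm
    · intro e he
      induction e using Sym2.ind with
      | _ u v =>
        rw [SimpleGraph.mem_edgeSet] at he
        have hadj : (bipGraph n P).Adj ↑u ↑v := he
        obtain ⟨uv, hu2⟩ := u
        obtain ⟨vv, hv2⟩ := v
        rcases hadj with ⟨a, b, h, hu, hv⟩ | ⟨a, b, h, hu, hv⟩
        · simp only at hu hv
          subst hu; subst hv
          have ha : a ≠ i := by
            intro h'; subst h'; exact hu2 rfl
          exact ⟨(a, b), ⟨ha, h⟩, hgE_eq a b ha⟩
        · simp only at hu hv
          subst hu; subst hv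
          have ha : a ≠ i := by
            intro h'; subst h'; exact hv2 rfl
          refine ⟨(a, b), ⟨ha, h⟩, ?_⟩
          rw [hgE_eq a b ha, Sym2.eq_swap]
    · rintro e ⟨⟨a, b⟩, ⟨ha, hab⟩, rfl⟩
      rw [hgE_eq a b ha, SimpleGraph.mem_edgeSet]
      show (bipGraph n P).Adj (Sum.inl a) (Sum.inr b)
      exact Or.inl ⟨a, b, hab, rfl, rfl⟩
  have hinj : E₀.InjOn gE := by
    rintro ⟨a, b⟩ ⟨ha, -⟩ ⟨a', b'⟩ ⟨ha', -⟩ h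
    rw [hgE_eq a b ha, hgE_eq a' b' ha', Sym2.eq_iff] at h
    rcases h with ⟨h1, h2⟩ | ⟨h1, h2⟩
    · simp only [Subtype.mk.injEq, Sum.inl.injEq, Sum.inr.injEq] at h1 h2
      exact Prod.ext h1 h2
    · simp only [Subtype.mk.injEq] at h1
      exact absurd h1 (by simp)
  rw [qForm, hedge, finsum_mem_image hinj]
  have hcongr : ∀ p ∈ E₀,
      Sym2.lift ⟨fun u v => z u * z v, fun _ _ => mul_comm _ _⟩ (gE p) =
      P p.1 p.2 * (if h : p.1 = i then 0 else z ⟨Sum.inl p.1, hL p.1 h⟩) *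
        z ⟨Sum.inr p.2, hR p.2⟩ := by
    rintro ⟨a, b⟩ ⟨ha, hab⟩
    rw [hgE_eq a b ha, Sym2.lift_mk]
    simp only [dif_neg ha, hab, one_mul]
  rw [finsum_mem_congr rfl hcongr]
  have hind : E₀.indicator (fun p => P p.1 p.2 *
      (if h : p.1 = i then 0 else z ⟨Sum.inl p.1, hL p.1 h⟩) * z ⟨Sum.inr p.2, hR p.2⟩) =
      fun p => P p.1 p.2 *
      (if h : p.1 = i then 0 else z ⟨Sum.inl p.1, hL p.1 h⟩) * z ⟨Sum.inr p.2, hR p.2⟩ := by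
    funext p
    by_cases hp : p ∈ E₀
    · rw [Set.indicator_of_mem hp]
    · rw [Set.indicator_of_notMem hp]
      rw [hE₀] at hp
      simp only [Set.mem_setOf_eq, not_and_or, not_not] at hp
      rcases hp with hp | hp
      · rw [dif_pos hp, mul_zero, zero_mul]
      · rcases zmod2_cases (P p.1 p.2) with h | h
        · rw [h, zero_mul, zero_mul]
        · exact absurd h hp
  rw [finsum_mem_def, hind, finsum_eq_sum_of_fintype, Fintype.sum_prod_type]

/-- for the bipartite graph `G` of `P` with `P Pᵀ = I`, `i ∈ L`, and `D ⊆ R`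
with `i ∈ Odd(D)`, the operator `U_D′ Z_{N_i} = Z_D X_{Odd(D) \\ {i}} Z_{N_i}` stabilizes the
graph state of the vertex-deleted graph `G \\ i` (here `Odd(D)` and `N_i` are computed
in `G`). -/
theorem stmt9 (n : ℕ) (hn : 1 ≤ n) (P : Matrix (Fin n) (Fin n) (ZMod 2))
    (hP : P * Pᵀ = 1) (i : Fin n) (D : Set (Fin n ⊕ Fin n))
    (hD : D ⊆ Set.range Sum.inr) (hodd : Sum.inl i ∈ oddNbhd (bipGraph n P) D) :
    ZOp {w : ({Sum.inl i}ᶜ : Set (Fin n ⊕ Fin n)) | ↑w ∈ D}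
      (XOp {w : ({Sum.inl i}ᶜ : Set (Fin n ⊕ Fin n)) |
              ↑w ∈ oddNbhd (bipGraph n P) D \ {Sum.inl i}}
        (ZOp {w : ({Sum.inl i}ᶜ : Set (Fin n ⊕ Fin n)) |
                (bipGraph n P).Adj (Sum.inl i) ↑w}
          (graphState (SimpleGraph.induce ({Sum.inl i}ᶜ : Set (Fin n ⊕ Fin n))
            (bipGraph n P))))) =
    graphState (SimpleGraph.induce ({Sum.inl i}ᶜ : Set (Fin n ⊕ Fin n)) (bipGraph n P)) := by
  classical
  funext x
  simp only [ZOp, XOp, graphState]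
  -- membership helpers
  have hL : ∀ (a : Fin n), a ≠ i →
      (Sum.inl a : Fin n ⊕ Fin n) ∈ ({Sum.inl i}ᶜ : Set (Fin n ⊕ Fin n)) := by
    intro a h; simp [h]
  have hR : ∀ b : Fin n,
      (Sum.inr b : Fin n ⊕ Fin n) ∈ ({Sum.inl i}ᶜ : Set (Fin n ⊕ Fin n)) := by
    intro b; simp
  set ι : Fin n → ↥({Sum.inl i}ᶜ : Set (Fin n ⊕ Fin n)) :=
    fun b => ⟨Sum.inr b, hR b⟩ with hι_def
  have hι : Function.Injective ι := by
    intro b b' h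
    have := Subtype.ext_iff.mp h
    exact Sum.inr.inj this
  -- basic data
  set d : Fin n → ZMod 2 := {b' | Sum.inr b' ∈ D}.indicator 1 with hd
  set Pd : Fin n → ZMod 2 := fun a => ∑ b, P a b * d b with hPd
  have hu2 : ∀ u : ZMod 2, u + u = 0 := by decide
  have hOdd_iff : ∀ a : Fin n, (Sum.inl a ∈ oddNbhd (bipGraph n P) D ↔ Pd a = 1) :=
    fun a => oddNbhd_inl D a
  have hPdi : Pd i = 1 := (hOdd_iff i).mp hodd
  set y : ↥({Sum.inl i}ᶜ : Set (Fin n ⊕ Fin n)) → ZMod 2 :=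
    x + Set.indicator {w : ({Sum.inl i}ᶜ : Set (Fin n ⊕ Fin n)) |
      ↑w ∈ oddNbhd (bipGraph n P) D \ {Sum.inl i}} 1 with hy
  set xR : Fin n → ZMod 2 := fun b => x (ι b) with hxR
  set XL : Fin n → ZMod 2 := fun a => if h : a = i then 0 else x ⟨Sum.inl a, hL a h⟩ with hXL
  set YL : Fin n → ZMod 2 := fun a => if h : a = i then 0 else y ⟨Sum.inl a, hL a h⟩ with hYL
  set sA : Fin n → ZMod 2 := fun a => if a = i then 0 else Pd a with hsA
  set ZD : ZMod 2 := ∑ b, d b * xR b with hZD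
  set ZN : ZMod 2 := ∑ b, P i b * xR b with hZN
  -- y agrees with x on the right part
  have hyR : ∀ b : Fin n, y (ι b) = x (ι b) := by
    intro b
    rw [hy, Pi.add_apply, Set.indicator_of_notMem, add_zero]
    intro hmem
    exact oddNbhd_inr hD b hmem.1
  -- y on the left part
  have hYLeq : ∀ a : Fin n, YL a = XL a + sA a := by
    intro a
    by_cases h : a = i
    · subst h
      simp only [hYL, hXL, hsA]
      simp
    · simp only [hYL, hXL, hsA]
      rw [dif_neg h, dif_neg h, if_neg h, hy, Pi.add_apply]
      congr 1
      by_cases hm : Sum.inl a ∈ oddNbhd (bipGraph n P) D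
      · rw [Set.indicator_of_mem]
        · exact ((hOdd_iff a).mp hm).symm
        · exact ⟨hm, by simp [h]⟩
      · rw [Set.indicator_of_notMem]
        · rcases zmod2_cases (Pd a) with h0 | h1
          · exact h0.symm
          · exact absurd ((hOdd_iff a).mpr h1) hm
        · intro hmem
          exact hm hmem.1
  -- identification of the three index sets
  have hSD : {w : ({Sum.inl i}ᶜ : Set (Fin n ⊕ Fin n)) | ↑w ∈ D} =
      ι '' {b | Sum.inr b ∈ D} := by
    ext ⟨w, hw⟩
    simp only [Set.mem_setOf_eq, Set.mem_image]
    constructor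
    · intro hwD
      rcases hD hwD with ⟨b, rfl⟩
      exact ⟨b, hwD, rfl⟩
    · rintro ⟨b, hb, hbe⟩
      have hwb : w = Sum.inr b := (Subtype.ext_iff.mp hbe).symm
      rw [hwb]; exact hb
  have hSN : {w : ({Sum.inl i}ᶜ : Set (Fin n ⊕ Fin n)) |
      (bipGraph n P).Adj (Sum.inl i) ↑w} = ι '' {b | P i b = 1} := by
    ext ⟨w, hw⟩
    simp only [Set.mem_setOf_eq, Set.mem_image, bipGraph_adj_inl]
    constructor
    · rintro ⟨b, h, hwb⟩
      exact ⟨b, h, by rw [hι_def]; exact Subtype.ext hwb.symm⟩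
    · rintro ⟨b, hb, hbe⟩
      exact ⟨b, hb, (Subtype.ext_iff.mp hbe).symm⟩
  -- exponent A
  have hA : ((-1 : ℂ)) ^ (∑ᶠ w ∈ {w : ({Sum.inl i}ᶜ : Set (Fin n ⊕ Fin n)) | ↑w ∈ D},
      (x w).val) = (-1) ^ ZD.val := by
    suffices h : ((∑ᶠ b ∈ {b | Sum.inr b ∈ D}, (x (ι b)).val : ℕ) : ZMod 2) = ZD by
      rw [hSD, finsum_mem_image (hι.injOn), ← chi_natCast, h]
    rw [cast_finsum_mem, hZD]
    apply Finset.sum_congr rfl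
    intro b _
    by_cases hb : b ∈ {b | Sum.inr b ∈ D}
    · rw [Set.indicator_of_mem hb]
      simp only [hd, hxR]
      rw [Set.indicator_of_mem hb, zmod2_val_cast, Pi.one_apply, one_mul]
    · rw [Set.indicator_of_notMem hb]
      simp only [hd]
      rw [Set.indicator_of_notMem hb, zero_mul]
  -- exponent B
  have hB : ((-1 : ℂ)) ^ (∑ᶠ w ∈ {w : ({Sum.inl i}ᶜ : Set (Fin n ⊕ Fin n)) |
      (bipGraph n P).Adj (Sum.inl i) ↑w}, (y w).val) = (-1) ^ ZN.val := by
    suffices h : ((∑ᶠ b ∈ {b | P i b = 1}, (y (ι b)).val : ℕ) : ZMod 2) = ZN by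
      rw [hSN, finsum_mem_image (hι.injOn), ← chi_natCast, h]
    rw [cast_finsum_mem, hZN]
    apply Finset.sum_congr rfl
    intro b _
    by_cases hb : b ∈ {b | P i b = 1}
    · rw [Set.indicator_of_mem hb, hyR b, zmod2_val_cast]
      have hb' : P i b = 1 := hb
      simp only [hxR]
      rw [hb', one_mul]
    · rw [Set.indicator_of_notMem hb]
      rcases zmod2_cases (P i b) with h0 | h1
      · rw [h0, zero_mul]
      · exact absurd h1 hb
  -- matrix fact : Pᵀ P = 1
  have hPtP : ∀ b b' : Fin n, (∑ a, P a b * P a b') = if b = b' then 1 else 0 := by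
    intro b b'
    have h2 : Pᵀ * P = 1 := mul_eq_one_comm.mp hP
    have h3 := congrFun (congrFun h2 b) b'
    simpa [Matrix.mul_apply, Matrix.transpose_apply, Matrix.one_apply] using h3
  -- the key column identity
  have hF5 : ∀ b : Fin n, (∑ a, P a b * sA a) = d b + P i b := by
    intro b
    have hsplit : ∀ a, P a b * sA a =
        P a b * Pd a + (if a = i then P a b * Pd a else 0) := by
      intro a
      by_cases h : a = i
      · subst h
        have hz : sA a = 0 := by simp [hsA]
        rw [hz, mul_zero, if_pos rfl, hu2]
      · simp only [hsA, if_neg h, add_zero]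
    rw [Finset.sum_congr rfl (fun a _ => hsplit a), Finset.sum_add_distrib,
      Finset.sum_ite_eq' Finset.univ i (fun a => P a b * Pd a)]
    simp only [Finset.mem_univ, if_pos, hPdi, mul_one]
    congr 1
    -- ∑ a, P a b * Pd a = d b
    simp only [hPd]
    calc (∑ a, P a b * ∑ b', P a b' * d b')
        = ∑ a, ∑ b', (P a b * P a b') * d b' := by
          apply Finset.sum_congr rfl
          intro a _
          rw [Finset.mul_sum]
          apply Finset.sum_congr rfl
          intro b' _
          ring
      _ = ∑ b', (∑ a, P a b * P a b') * d b' := by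
          rw [Finset.sum_comm]
          apply Finset.sum_congr rfl
          intro b' _
          rw [Finset.sum_mul]
      _ = ∑ b', (if b = b' then 1 else 0) * d b' := by
          apply Finset.sum_congr rfl
          intro b' _
          rw [hPtP b b']
      _ = d b := by
          simp [Finset.sum_ite_eq]
  -- the quadratic forms
  have hqx : qForm (SimpleGraph.induce ({Sum.inl i}ᶜ : Set (Fin n ⊕ Fin n)) (bipGraph n P)) x
      = ∑ a, ∑ b, P a b * XL a * xR b := qForm_induce P i x
  have hqy : qForm (SimpleGraph.induce ({Sum.inl i}ᶜ : Set (Fin n ⊕ Fin n)) (bipGraph n P)) y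
      = ∑ a, ∑ b, P a b * YL a * xR b := by
    rw [qForm_induce P i y]
    apply Finset.sum_congr rfl
    intro a _
    apply Finset.sum_congr rfl
    intro b _
    congr 1
    exact hyR b
  have hQ : qForm (SimpleGraph.induce ({Sum.inl i}ᶜ : Set (Fin n ⊕ Fin n)) (bipGraph n P)) y
      = qForm (SimpleGraph.induce ({Sum.inl i}ᶜ : Set (Fin n ⊕ Fin n)) (bipGraph n P)) x
        + (ZD + ZN) := by
    rw [hqy, hqx]
    have expand : ∀ a b : Fin n, P a b * YL a * xR b =
        P a b * XL a * xR b + P a b * sA a * xR b := by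
      intro a b
      rw [hYLeq a]
      ring
    rw [Finset.sum_congr rfl (fun a _ => Finset.sum_congr rfl (fun b _ => expand a b))]
    simp only [Finset.sum_add_distrib]
    congr 1
    -- ∑ a ∑ b P a b sA a xR b = ZD + ZN
    rw [Finset.sum_comm]
    have : ∀ b : Fin n, (∑ a, P a b * sA a * xR b) = (d b + P i b) * xR b := by
      intro b
      rw [← Finset.sum_mul, hF5 b]
    rw [Finset.sum_congr rfl (fun b _ => this b)]
    rw [hZD, hZN, ← Finset.sum_add_distrib]
    apply Finset.sum_congr rfl
    intro b _
    ring
  -- final assembly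
  rw [hA, hB, hQ, chi_add, chi_add]
  have c2 := chi_sq ZD
  have c3 := chi_sq ZN
  calc ((-1:ℂ)) ^ ZD.val * ((-1) ^ ZN.val *
        ((Real.sqrt 2 : ℂ)⁻¹ ^ Nat.card ↥({Sum.inl i}ᶜ : Set (Fin n ⊕ Fin n)) *
          ((-1) ^ (qForm (SimpleGraph.induce ({Sum.inl i}ᶜ : Set (Fin n ⊕ Fin n))
            (bipGraph n P)) x).val * ((-1) ^ ZD.val * (-1) ^ ZN.val))))
      = ((Real.sqrt 2 : ℂ)⁻¹ ^ Nat.card ↥({Sum.inl i}ᶜ : Set (Fin n ⊕ Fin n)) *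
          (-1) ^ (qForm (SimpleGraph.induce ({Sum.inl i}ᶜ : Set (Fin n ⊕ Fin n))
            (bipGraph n P)) x).val) *
        (((-1:ℂ)) ^ ZD.val * (-1) ^ ZD.val) * (((-1:ℂ)) ^ ZN.val * (-1) ^ ZN.val) := by
        ring
    _ = _ := by rw [c2, c3, mul_one, mul_one]
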